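/- Let f(ε) = min_x max_{Q : W(P̂,Q) ≤ ε} E_Q[c(x, δ)] be the optimal value of a Wasserstein DRO problem as a function of the radius ε ≥ 0. Then f is nondecreasing and concave in ε. -/

import Mathlib

open MeasureTheory
open scoped ENNReal

/-- 1-Wasserstein distance defined via couplings. -/
noncomputable def W1 {Ξ : Type*} [MeasurableSpace Ξ] [EMetricSpace Ξ]
    (P Q : Measure Ξ) : ℝ≥0∞ :=
  ⨅ μ ∈ {μ : Measure (Ξ × Ξ) | μ.map Prod.fst = P ∧ μ.map Prod.snd = Q},
    ∫⁻ x, edist x.1 x.2 ∂μ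

section Aux

variable {Ξ : Type*} [MeasurableSpace Ξ] [EMetricSpace Ξ]

lemma W1_le_lintegral {P Q : Measure Ξ} {μ : Measure (Ξ × Ξ)}
    (h1 : μ.map Prod.fst = P) (h2 : μ.map Prod.snd = Q) :
    W1 P Q ≤ ∫⁻ x, edist x.1 x.2 ∂μ :=
  iInf₂_le μ ⟨h1, h2⟩

lemma W1_self (P : Measure Ξ) : W1 P P ≤ 0 := by
  have hd : Measurable (fun x : Ξ => (x, x)) := measurable_id.prodMk measurable_id
  have h1 : (P.map (fun x : Ξ => (x, x))).map Prod.fst = P := by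
    have : (Prod.fst ∘ fun x : Ξ => (x, x)) = id := rfl
    rw [Measure.map_map measurable_fst hd, this, Measure.map_id]
  have h2 : (P.map (fun x : Ξ => (x, x))).map Prod.snd = P := by
    have : (Prod.snd ∘ fun x : Ξ => (x, x)) = id := rfl
    rw [Measure.map_map measurable_snd hd, this, Measure.map_id]
  calc W1 P P ≤ ∫⁻ x : Ξ × Ξ, edist x.1 x.2 ∂(P.map (fun x : Ξ => (x, x))) :=
        W1_le_lintegral h1 h2
    _ ≤ ∫⁻ x : Ξ, edist x x ∂P := lintegral_map_le (fun x : Ξ × Ξ => edist x.1 x.2) (fun x : Ξ => (x, x))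
    _ = 0 := by simp

lemma exists_coupling_lt {P Q : Measure Ξ} {r : ℝ≥0∞} (h : W1 P Q < r) :
    ∃ μ : Measure (Ξ × Ξ), μ.map Prod.fst = P ∧ μ.map Prod.snd = Q ∧
      ∫⁻ x, edist x.1 x.2 ∂μ < r := by
  rw [W1] at h
  obtain ⟨μ, hμ⟩ := iInf_lt_iff.mp h
  obtain ⟨hmem, hlt⟩ := iInf_lt_iff.mp hμ
  exact ⟨μ, hmem.1, hmem.2, hlt⟩

/-- convexity of the Wasserstein ball constraint -/
lemma W1_mix (P Q₁ Q₂ : Measure Ξ) (a b e₁ e₂ : ℝ≥0∞) (hab : a + b = 1)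
    (he₁ : e₁ ≠ ⊤) (he₂ : e₂ ≠ ⊤)
    (h₁ : W1 P Q₁ ≤ e₁) (h₂ : W1 P Q₂ ≤ e₂) :
    W1 P (a • Q₁ + b • Q₂) ≤ a * e₁ + b * e₂ := by
  refine ENNReal.le_of_forall_pos_le_add fun δ hδ _ => ?_
  have hδ0 : (δ : ℝ≥0∞) ≠ 0 := by simpa using hδ.ne'
  obtain ⟨μ₁, hμ₁1, hμ₁2, hI₁⟩ :=
    exists_coupling_lt (lt_of_le_of_lt h₁ (ENNReal.lt_add_right he₁ hδ0))
  obtain ⟨μ₂, hμ₂1, hμ₂2, hI₂⟩ :=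
    exists_coupling_lt (lt_of_le_of_lt h₂ (ENNReal.lt_add_right he₂ hδ0))
  have ha1 : a ≤ 1 := by rw [← hab]; exact le_self_add
  have hb1 : b ≤ 1 := by rw [← hab]; exact le_add_self
  have hm1 : (a • μ₁ + b • μ₂).map Prod.fst = P := by
    rw [Measure.map_add _ _ measurable_fst, Measure.map_smul, Measure.map_smul,
      hμ₁1, hμ₂1, ← add_smul, hab, one_smul]
  have hm2 : (a • μ₁ + b • μ₂).map Prod.snd = a • Q₁ + b • Q₂ := by
    rw [Measure.map_add _ _ measurable_snd, Measure.map_smul, Measure.map_smul, hμ₁2, hμ₂2]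
  calc W1 P (a • Q₁ + b • Q₂) ≤ ∫⁻ x, edist x.1 x.2 ∂(a • μ₁ + b • μ₂) :=
        W1_le_lintegral hm1 hm2
    _ = a * ∫⁻ x, edist x.1 x.2 ∂μ₁ + b * ∫⁻ x, edist x.1 x.2 ∂μ₂ := by
        rw [lintegral_add_measure, lintegral_smul_measure, lintegral_smul_measure, smul_eq_mul, smul_eq_mul]
    _ ≤ a * (e₁ + δ) + b * (e₂ + δ) :=
        add_le_add (mul_le_mul_right hI₁.le a) (mul_le_mul_right hI₂.le b)
    _ = (a * e₁ + b * e₂) + (a + b) * δ := by ring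
    _ = (a * e₁ + b * e₂) + δ := by rw [hab, one_mul]

end Aux

/-- the optimal value `f(ε) = inf_x sup_{Q : W(P̂,Q) ≤ ε} E_Q[c(x,δ)]` of a
Wasserstein DRO problem is nondecreasing and concave as a function of the radius `ε ≥ 0`. -/
theorem stmt9 {X Ξ : Type*} [Nonempty X] [MeasurableSpace Ξ] [EMetricSpace Ξ]
    (c : X → Ξ → ℝ) (hmeas : ∀ x, Measurable (c x))
    (M : ℝ) (hbdd : ∀ x ξ, |c x ξ| ≤ M)
    (Phat : Measure Ξ) [IsProbabilityMeasure Phat] :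
    let f : ℝ → ℝ := fun ε =>
      sInf {v : ℝ | ∃ x : X, v = sSup {e : ℝ | ∃ Q : Measure Ξ,
        IsProbabilityMeasure Q ∧ W1 Phat Q ≤ ENNReal.ofReal ε ∧ e = ∫ ξ, c x ξ ∂Q}}
    MonotoneOn f (Set.Ici 0) ∧ ConcaveOn ℝ (Set.Ici 0) f := by
  intro f
  -- the feasible-value sets
  set T : X → ℝ → Set ℝ := fun x ε => {e : ℝ | ∃ Q : Measure Ξ,
    IsProbabilityMeasure Q ∧ W1 Phat Q ≤ ENNReal.ofReal ε ∧ e = ∫ ξ, c x ξ ∂Q} with hT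
  set S : ℝ → Set ℝ := fun ε => {v : ℝ | ∃ x : X, v = sSup (T x ε)} with hS
  have hfS : ∀ ε, f ε = sInf (S ε) := fun ε => rfl
  -- basic integral facts
  have hint : ∀ (x : X) (Q : Measure Ξ), IsProbabilityMeasure Q → Integrable (c x) Q := by
    intro x Q hQ
    exact ⟨(hmeas x).aestronglyMeasurable,
      HasFiniteIntegral.of_bounded (C := M) (ae_of_all _ fun ξ => by
        simpa [Real.norm_eq_abs] using hbdd x ξ)⟩
  have hintbd : ∀ (x : X) (Q : Measure Ξ), IsProbabilityMeasure Q → |∫ ξ, c x ξ ∂Q| ≤ M := by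
    intro x Q hQ
    have := norm_integral_le_of_norm_le_const (μ := Q) (f := c x) (C := M)
      (ae_of_all _ fun ξ => by simpa [Real.norm_eq_abs] using hbdd x ξ)
    simpa [Real.norm_eq_abs] using this
  -- membership of Phat
  have hPhatT : ∀ (x : X) (ε : ℝ), (∫ ξ, c x ξ ∂Phat) ∈ T x ε := by
    intro x ε
    exact ⟨Phat, inferInstance, le_trans (W1_self Phat) zero_le, rfl⟩
  have hTne : ∀ (x : X) (ε : ℝ), (T x ε).Nonempty := fun x ε => ⟨_, hPhatT x ε⟩
  have hTbdd : ∀ (x : X) (ε : ℝ), BddAbove (T x ε) := by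
    intro x ε
    refine ⟨M, fun e he => ?_⟩
    obtain ⟨Q, hQ, _, rfl⟩ := he
    exact (abs_le.mp (hintbd x Q hQ)).2
  have hTlb : ∀ (x : X) (ε : ℝ) (e : ℝ), e ∈ T x ε → -M ≤ e := by
    intro x ε e he
    obtain ⟨Q, hQ, _, rfl⟩ := he
    exact (abs_le.mp (hintbd x Q hQ)).1
  have hglb : ∀ (x : X) (ε : ℝ), -M ≤ sSup (T x ε) :=
    fun x ε => le_trans (hTlb x ε _ (hPhatT x ε)) (le_csSup (hTbdd x ε) (hPhatT x ε))
  have hSne : ∀ ε : ℝ, (S ε).Nonempty := by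
    intro ε
    obtain ⟨x⟩ := ‹Nonempty X›
    exact ⟨sSup (T x ε), x, rfl⟩
  have hSbdd : ∀ ε : ℝ, BddBelow (S ε) := by
    intro ε
    refine ⟨-M, fun v hv => ?_⟩
    obtain ⟨x, rfl⟩ := hv
    exact hglb x ε
  have hfg : ∀ (ε : ℝ) (x : X), f ε ≤ sSup (T x ε) :=
    fun ε x => csInf_le (hSbdd ε) ⟨x, rfl⟩
  -- monotonicity of sSup (T x ·)
  have hgmono : ∀ (x : X) (ε₁ ε₂ : ℝ), ε₁ ≤ ε₂ → sSup (T x ε₁) ≤ sSup (T x ε₂) := by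
    intro x ε₁ ε₂ h
    refine csSup_le_csSup (hTbdd x ε₂) (hTne x ε₁) ?_
    rintro e ⟨Q, hQ, hW, rfl⟩
    exact ⟨Q, hQ, le_trans hW (ENNReal.ofReal_le_ofReal h), rfl⟩
  constructor
  · -- monotone
    intro ε₁ _ ε₂ _ h
    rw [hfS, hfS]
    refine le_csInf (hSne ε₂) ?_
    rintro v ⟨x, rfl⟩
    exact le_trans (hfg ε₁ x) (hgmono x ε₁ ε₂ h)
  · -- concave
    refine ⟨convex_Ici 0, ?_⟩
    intro ε₁ hε₁ ε₂ hε₂ a b ha hb hab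
    simp only [smul_eq_mul]
    have key : ∀ x : X,
        a * sSup (T x ε₁) + b * sSup (T x ε₂) ≤ sSup (T x (a * ε₁ + b * ε₂)) := by
      intro x
      refine le_of_forall_pos_le_add fun δ hδ => ?_
      obtain ⟨e₁, he₁T, he₁⟩ := exists_lt_of_lt_csSup (hTne x ε₁)
        (show sSup (T x ε₁) - δ < sSup (T x ε₁) by linarith)
      obtain ⟨e₂, he₂T, he₂⟩ := exists_lt_of_lt_csSup (hTne x ε₂)
        (show sSup (T x ε₂) - δ < sSup (T x ε₂) by linarith)
      obtain ⟨Q₁, hQ₁, hW₁, rfl⟩ := he₁T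
      obtain ⟨Q₂, hQ₂, hW₂, rfl⟩ := he₂T
      -- the mixture measure
      set Qm : Measure Ξ := ENNReal.ofReal a • Q₁ + ENNReal.ofReal b • Q₂ with hQm
      have habE : ENNReal.ofReal a + ENNReal.ofReal b = 1 := by
        rw [← ENNReal.ofReal_add ha hb, hab, ENNReal.ofReal_one]
      have hQmProb : IsProbabilityMeasure Qm := by
        constructor
        simp [hQm, hQ₁.measure_univ, hQ₂.measure_univ, habE]
      have hQmW : W1 Phat Qm ≤ ENNReal.ofReal (a * ε₁ + b * ε₂) := by
        have := W1_mix Phat Q₁ Q₂ (ENNReal.ofReal a) (ENNReal.ofReal b)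
          (ENNReal.ofReal ε₁) (ENNReal.ofReal ε₂) habE ENNReal.ofReal_ne_top
          ENNReal.ofReal_ne_top hW₁ hW₂
        refine le_trans this (le_of_eq ?_)
        rw [← ENNReal.ofReal_mul ha, ← ENNReal.ofReal_mul hb,
          ← ENNReal.ofReal_add (mul_nonneg ha hε₁) (mul_nonneg hb hε₂)]
      have hQmInt : ∫ ξ, c x ξ ∂Qm = a * (∫ ξ, c x ξ ∂Q₁) + b * (∫ ξ, c x ξ ∂Q₂) := by
        rw [hQm, integral_add_measure
            ((hint x Q₁ hQ₁).smul_measure ENNReal.ofReal_ne_top)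
            ((hint x Q₂ hQ₂).smul_measure ENNReal.ofReal_ne_top),
          integral_smul_measure, integral_smul_measure,
          ENNReal.toReal_ofReal ha, ENNReal.toReal_ofReal hb, smul_eq_mul, smul_eq_mul]
      have hmem : a * (∫ ξ, c x ξ ∂Q₁) + b * (∫ ξ, c x ξ ∂Q₂) ∈ T x (a * ε₁ + b * ε₂) :=
        ⟨Qm, hQmProb, hQmW, hQmInt.symm⟩
      have hle : a * (∫ ξ, c x ξ ∂Q₁) + b * (∫ ξ, c x ξ ∂Q₂) ≤
          sSup (T x (a * ε₁ + b * ε₂)) := le_csSup (hTbdd x _) hmem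
      nlinarith [mul_le_mul_of_nonneg_left he₁.le ha, mul_le_mul_of_nonneg_left he₂.le hb,
        mul_le_mul_of_nonneg_right ha hδ.le, mul_le_mul_of_nonneg_right hb hδ.le]
    rw [hfS, hfS, hfS]
    refine le_csInf (hSne _) ?_
    rintro v ⟨x, rfl⟩
    calc a * sInf (S ε₁) + b * sInf (S ε₂)
        ≤ a * sSup (T x ε₁) + b * sSup (T x ε₂) :=
          add_le_add (mul_le_mul_of_nonneg_left (csInf_le (hSbdd ε₁) ⟨x, rfl⟩) ha)
            (mul_le_mul_of_nonneg_left (csInf_le (hSbdd ε₂) ⟨x, rfl⟩) hb)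
      _ ≤ sSup (T x (a * ε₁ + b * ε₂)) := key x
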